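/- Let z1, z2 be linearly independent vectors in EuclideanSpace ℝ (Fin 3) and set z3 = -z1 - z2. Let A be the real 3×3 matrix A = ![![‖z1‖², 0, 0], ![-⟪z2, z1⟫, ‖z2‖², -⟪z2, z3⟫], ![0, -⟪z3, z2⟫, ‖z3‖²]]. Let w4, w5, w6 be linearly independent vectors in EuclideanSpace ℝ (Fin 3), let G be the 3×3 Gram matrix with entries G i j = ⟪w_i, w_j⟫ for i, j ∈ {4,5,6}, and let B be an arbitrary real 3×3 matrix. Then every complex eigenvalue of the 6×6 block lower-triangular matrix Matrix.fromBlocks A 0 B G (every root in ℂ of its characteristic polynomial) has strictly positive real part; equivalently, its negative is Hurwitz. -/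
import Mathlib


open scoped InnerProductSpace

/-- A root of the characteristic polynomial of a complex matrix admits an eigenvector. -/
lemma exists_eigvec {n : Type*} [Fintype n] [DecidableEq n] (M : Matrix n n ℂ) (μ : ℂ)
    (h : M.charpoly.IsRoot μ) : ∃ v : n → ℂ, v ≠ 0 ∧ M.mulVec v = μ • v := by
  have hdet : (μ • (1 : Matrix n n ℂ) - M).det = 0 := by
    have h' : (Polynomial.evalRingHom μ) M.charpoly = 0 := h
    rw [Matrix.charpoly, RingHom.map_det] at h'
    have hEq : (Matrix.charmatrix M).map (Polynomial.evalRingHom μ)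
        = μ • (1 : Matrix n n ℂ) - M := by
      ext i j
      by_cases hij : i = j
      · subst hij
        simp [Matrix.charmatrix_apply_eq, Matrix.one_apply]
      · simp [Matrix.charmatrix_apply_ne _ _ _ hij, Matrix.one_apply, hij]
    rwa [RingHom.mapMatrix_apply, hEq] at h'
  obtain ⟨v, hv, hmv⟩ := (Matrix.exists_mulVec_eq_zero_iff).2 hdet
  refine ⟨v, hv, ?_⟩
  have := hmv
  rw [Matrix.sub_mulVec, Matrix.smul_mulVec, Matrix.one_mulVec, sub_eq_zero] at this
  exact this.symm

/-- Every complex eigenvalue of (the complexification of) the Gram matrix of linearly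
independent real vectors has positive real part. -/
lemma gram_eig {m : ℕ} (u : Fin m → EuclideanSpace ℝ (Fin 3)) (hu : LinearIndependent ℝ u)
    (M : Matrix (Fin m) (Fin m) ℝ) (hM : ∀ i j, M i j = ⟪u i, u j⟫_ℝ)
    (μ : ℂ) (v : Fin m → ℂ) (hv : v ≠ 0)
    (heig : (M.map ((↑) : ℝ → ℂ)).mulVec v = μ • v) : 0 < μ.re := by
  classical
  set x : Fin m → ℝ := fun i => (v i).re with hx
  set y : Fin m → ℝ := fun i => (v i).im with hy
  set N : ℝ := ∑ i, Complex.normSq (v i) with hN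
  have hNpos : 0 < N := by
    obtain ⟨i, hi⟩ : ∃ i, v i ≠ 0 := by
      by_contra hc
      push_neg at hc
      exact hv (funext fun i => hc i)
    exact Finset.sum_pos' (fun j _ => Complex.normSq_nonneg _)
      ⟨i, Finset.mem_univ i, Complex.normSq_pos.mpr hi⟩
  -- the quadratic form identity
  have hrow : ∀ i, (∑ j, (M i j : ℂ) * v j) = μ * v i := by
    intro i
    have := congrFun heig i
    simpa [Matrix.mulVec, dotProduct, Matrix.map_apply] using this
  have hS : (∑ i, (starRingEnd ℂ) (v i) * ∑ j, (M i j : ℂ) * v j) = μ * (N : ℂ) := by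
    calc (∑ i, (starRingEnd ℂ) (v i) * ∑ j, (M i j : ℂ) * v j)
        = ∑ i, (starRingEnd ℂ) (v i) * (μ * v i) := by
          refine Finset.sum_congr rfl fun i _ => by rw [hrow i]
      _ = μ * ∑ i, (starRingEnd ℂ) (v i) * v i := by
          rw [Finset.mul_sum]; exact Finset.sum_congr rfl fun i _ => by ring
      _ = μ * (N : ℂ) := by
          rw [hN]
          push_cast
          congr 1
          exact Finset.sum_congr rfl fun i _ => by
            rw [Complex.normSq_eq_conj_mul_self]
  have hre : (∑ i, (starRingEnd ℂ) (v i) * ∑ j, (M i j : ℂ) * v j).re = μ.re * N := by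
    rw [hS]
    simp [Complex.mul_re]
  have hre2 : (∑ i, (starRingEnd ℂ) (v i) * ∑ j, (M i j : ℂ) * v j).re
      = ∑ i, ∑ j, M i j * (x i * x j + y i * y j) := by
    rw [Complex.re_sum]
    refine Finset.sum_congr rfl fun i _ => ?_
    rw [Finset.mul_sum, Complex.re_sum]
    refine Finset.sum_congr rfl fun j _ => ?_
    simp [Complex.mul_re, Complex.mul_im, hx, hy]
    ring
  -- Gram form as squared norms
  have hform : ∀ c : Fin m → ℝ,
      (∑ i, ∑ j, M i j * (c i * c j)) = ‖∑ i, c i • u i‖ ^ 2 := by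
    intro c
    rw [← real_inner_self_eq_norm_sq, sum_inner]
    refine Finset.sum_congr rfl fun i _ => ?_
    rw [inner_sum]
    refine Finset.sum_congr rfl fun j _ => ?_
    rw [real_inner_smul_left, real_inner_smul_right, hM]
    ring
  have hsplit : (∑ i, ∑ j, M i j * (x i * x j + y i * y j))
      = ‖∑ i, x i • u i‖ ^ 2 + ‖∑ i, y i • u i‖ ^ 2 := by
    rw [← hform x, ← hform y, ← Finset.sum_add_distrib]
    refine Finset.sum_congr rfl fun i _ => ?_
    rw [← Finset.sum_add_distrib]
    refine Finset.sum_congr rfl fun j _ => by ring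
  -- one of x, y is nonzero
  have hxy : x ≠ 0 ∨ y ≠ 0 := by
    by_contra hc
    push_neg at hc
    apply hv
    funext i
    have hx0 : x i = 0 := by rw [hc.1]; rfl
    have hy0 : y i = 0 := by rw [hc.2]; rfl
    exact Complex.ext hx0 hy0
  have hind := Fintype.linearIndependent_iff.mp hu
  have hne : ∀ c : Fin m → ℝ, c ≠ 0 → (0 : ℝ) < ‖∑ i, c i • u i‖ ^ 2 := by
    intro c hc
    have hsum : (∑ i, c i • u i) ≠ 0 := by
      intro h0
      apply hc
      funext i
      exact hind c h0 i
    have := norm_pos_iff.mpr hsum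
    positivity
  have hpos : 0 < μ.re * N := by
    rw [← hre, hre2, hsplit]
    rcases hxy with hx0 | hy0
    · have h1 := hne x hx0
      have h2 : (0:ℝ) ≤ ‖∑ i, y i • u i‖ ^ 2 := by positivity
      linarith
    · have h1 := hne y hy0
      have h2 : (0:ℝ) ≤ ‖∑ i, x i • u i‖ ^ 2 := by positivity
      linarith
  by_contra hle
  push_neg at hle
  nlinarith

theorem stmt_3 (z1 z2 z3 : EuclideanSpace ℝ (Fin 3))
    (hind : LinearIndependent ℝ ![z1, z2])
    (hz3 : z3 = -z1 - z2)
    (A : Matrix (Fin 3) (Fin 3) ℝ)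
    (hA : A = !![‖z1‖ ^ 2, 0, 0;
                 -⟪z2, z1⟫_ℝ, ‖z2‖ ^ 2, -⟪z2, z3⟫_ℝ;
                 0, -⟪z3, z2⟫_ℝ, ‖z3‖ ^ 2])
    (w : Fin 3 → EuclideanSpace ℝ (Fin 3))
    (hw : LinearIndependent ℝ w)
    (G : Matrix (Fin 3) (Fin 3) ℝ)
    (hG : ∀ i j, G i j = ⟪w i, w j⟫_ℝ)
    (B : Matrix (Fin 3) (Fin 3) ℝ) :
    ∀ μ : ℂ,
      (Matrix.charpoly ((Matrix.fromBlocks A 0 B G).map ((↑) : ℝ → ℂ))).IsRoot μ →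
        0 < μ.re := by
  intro μ hroot
  have hmap : (Matrix.fromBlocks A 0 B G).map ((↑) : ℝ → ℂ)
      = Matrix.fromBlocks (A.map ((↑) : ℝ → ℂ)) 0 (B.map ((↑) : ℝ → ℂ))
        (G.map ((↑) : ℝ → ℂ)) := by
    rw [Matrix.fromBlocks_map, Matrix.map_zero _ Complex.ofReal_zero]
  rw [hmap, Matrix.charpoly_fromBlocks_zero₁₂] at hroot
  rw [Polynomial.IsRoot, Polynomial.eval_mul, mul_eq_zero] at hroot
  -- the pair z2, -z3 is linearly independent
  have h23 : LinearIndependent ℝ ![z2, -z3] := by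
    rw [LinearIndependent.pair_iff]
    intro s t hst
    have hpair := LinearIndependent.pair_iff.mp hind
    have h' : t • z1 + (s + t) • z2 = 0 := by
      rw [← hst, hz3]
      module
    obtain ⟨ht, hst0⟩ := hpair t (s + t) h'
    exact ⟨by linarith, ht⟩
  rcases hroot with hA' | hG'
  · -- eigenvalue of A
    obtain ⟨v, hv, heig⟩ := exists_eigvec _ μ hA'
    have h0 := congrFun heig 0
    have h1 := congrFun heig 1
    have h2 := congrFun heig 2
    rw [hA] at h0 h1 h2
    simp only [Matrix.mulVec, dotProduct, Fin.sum_univ_three, Matrix.map_apply,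
      Matrix.cons_val', Matrix.cons_val_zero, Matrix.cons_val_one, Matrix.head_cons,
      Matrix.empty_val', Matrix.cons_val_fin_one, Matrix.head_fin_const, Matrix.cons_val_two,
      Matrix.tail_cons, Matrix.of_apply, Pi.smul_apply, smul_eq_mul] at h0 h1 h2
    by_cases hv0 : v 0 = 0
    · -- reduce to the 2×2 Gram block of (z2, -z3)
      have hv' : (![v 1, v 2] : Fin 2 → ℂ) ≠ 0 := by
        intro hc
        apply hv
        have e1 : v 1 = 0 := by simpa using congrFun hc 0
        have e2 : v 2 = 0 := by simpa using congrFun hc 1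
        funext i
        fin_cases i <;> simp [hv0, e1, e2]
      rw [hv0] at h1
      have r0 : ((⟪z2, z2⟫_ℝ : ℝ) : ℂ) * v 1 + ((⟪z2, -z3⟫_ℝ : ℝ) : ℂ) * v 2 = μ * v 1 := by
        rw [inner_neg_right, real_inner_self_eq_norm_sq]
        push_cast at h1 ⊢
        linear_combination h1
      have r1 : ((⟪-z3, z2⟫_ℝ : ℝ) : ℂ) * v 1 + ((⟪-z3, -z3⟫_ℝ : ℝ) : ℂ) * v 2 = μ * v 2 := by
        rw [inner_neg_neg, inner_neg_left, real_inner_self_eq_norm_sq]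
        push_cast at h2 ⊢
        linear_combination h2
      have heig' : ((Matrix.of fun i j => ⟪(![z2, -z3]) i, (![z2, -z3]) j⟫_ℝ).map
          ((↑) : ℝ → ℂ)).mulVec ![v 1, v 2] = μ • ![v 1, v 2] := by
        funext i
        fin_cases i
        · have h := r0
          simp [Matrix.mulVec, dotProduct, Fin.sum_univ_two] at h ⊢
          linear_combination h
        · have h := r1
          simp [Matrix.mulVec, dotProduct, Fin.sum_univ_two] at h ⊢
          linear_combination h
      exact gram_eig ![z2, -z3] h23
        (Matrix.of fun i j => ⟪(![z2, -z3]) i, (![z2, -z3]) j⟫_ℝ)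
        (fun i j => rfl) μ ![v 1, v 2] hv' heig'
    · -- μ = ‖z1‖²
      have hz1 : z1 ≠ 0 := by simpa using hind.ne_zero 0
      have hfac : (((‖z1‖ ^ 2 : ℝ) : ℂ) - μ) * v 0 = 0 := by
        push_cast at h0 ⊢
        linear_combination h0
      rcases mul_eq_zero.mp hfac with h | h
      · have hμ : μ = ((‖z1‖ ^ 2 : ℝ) : ℂ) := by linear_combination -h
        rw [hμ]
        simp only [Complex.ofReal_re]
        have : 0 < ‖z1‖ := norm_pos_iff.mpr hz1
        positivity
      · exact absurd h hv0
  · -- eigenvalue of G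
    obtain ⟨v, hv, heig⟩ := exists_eigvec _ μ hG'
    exact gram_eig w hw G hG μ v hv heig
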